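/- The dynamical r-matrix r(L) = Σ_{i<j} (E_{ij}⊗E_{ji} - E_{ji}⊗E_{ij})/(λ_i - λ_j) satisfies the classical dynamical Yang–Baxter equation: [r^{12}, r^{13}] + [r^{12}, r^{23}] + [r^{23}, r^{31}] + Σ_{i=1}^n (∂r^{12}/∂λ_i) E³_{ii} + (∂r^{23}/∂λ_i) E¹_{ii} + (∂r^{31}/∂λ_i) E²_{ii} = 0, where superscripts denote the tensor legs in (ℂⁿ)^{⊗3} on which the operators act. -/

import Mathlib

set_option maxRecDepth 8000
set_option maxHeartbeats 1000000
set_option linter.unreachableTactic false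
set_option linter.unusedTactic false


open Matrix
open scoped Kronecker

namespace DynamicalYB

variable (n : ℕ)

/-- Elementary matrix `E_{ij}`. -/
noncomputable def E (i j : Fin n) : Matrix (Fin n) (Fin n) ℂ :=
  Matrix.single i j 1

/-- The dynamical r-matrix
`r(L) = Σ_{i<j} (E_{ij}⊗E_{ji} - E_{ji}⊗E_{ij})/(λ_i - λ_j)`,
viewed as a matrix on `ℂⁿ ⊗ ℂⁿ` (indexed by pairs). -/
noncomputable def rmat (lam : Fin n → ℂ) : Matrix (Fin n × Fin n) (Fin n × Fin n) ℂ :=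
  ∑ p ∈ Finset.univ.filter (fun p : Fin n × Fin n => p.1 < p.2),
    (lam p.1 - lam p.2)⁻¹ •
      (E n p.1 p.2 ⊗ₖ E n p.2 p.1 - E n p.2 p.1 ⊗ₖ E n p.1 p.2)

/-- Operator acting on legs 1 and 2 of `ℂⁿ⊗ℂⁿ⊗ℂⁿ`. -/
noncomputable def leg12 (A : Matrix (Fin n × Fin n) (Fin n × Fin n) ℂ) :
    Matrix (Fin n × Fin n × Fin n) (Fin n × Fin n × Fin n) ℂ :=
  Matrix.of fun x y => A (x.1, x.2.1) (y.1, y.2.1) * (if x.2.2 = y.2.2 then 1 else 0)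

/-- Operator acting on legs 2 and 3. -/
noncomputable def leg23 (A : Matrix (Fin n × Fin n) (Fin n × Fin n) ℂ) :
    Matrix (Fin n × Fin n × Fin n) (Fin n × Fin n × Fin n) ℂ :=
  Matrix.of fun x y => (if x.1 = y.1 then 1 else 0) * A x.2 y.2

/-- Operator acting on legs 1 and 3. -/
noncomputable def leg13 (A : Matrix (Fin n × Fin n) (Fin n × Fin n) ℂ) :
    Matrix (Fin n × Fin n × Fin n) (Fin n × Fin n × Fin n) ℂ :=
  Matrix.of fun x y => A (x.1, x.2.2) (y.1, y.2.2) * (if x.2.1 = y.2.1 then 1 else 0)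

/-- Operator acting with first leg on space 3 and second leg on space 1. -/
noncomputable def leg31 (A : Matrix (Fin n × Fin n) (Fin n × Fin n) ℂ) :
    Matrix (Fin n × Fin n × Fin n) (Fin n × Fin n × Fin n) ℂ :=
  Matrix.of fun x y => A (x.2.2, x.1) (y.2.2, y.1) * (if x.2.1 = y.2.1 then 1 else 0)

/-- Operator acting on leg 1 only. -/
noncomputable def leg1 (A : Matrix (Fin n) (Fin n) ℂ) :
    Matrix (Fin n × Fin n × Fin n) (Fin n × Fin n × Fin n) ℂ :=
  Matrix.of fun x y => A x.1 y.1 *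
    (if x.2.1 = y.2.1 then 1 else 0) * (if x.2.2 = y.2.2 then 1 else 0)

/-- Operator acting on leg 2 only. -/
noncomputable def leg2 (A : Matrix (Fin n) (Fin n) ℂ) :
    Matrix (Fin n × Fin n × Fin n) (Fin n × Fin n × Fin n) ℂ :=
  Matrix.of fun x y => (if x.1 = y.1 then 1 else 0) * A x.2.1 y.2.1 *
    (if x.2.2 = y.2.2 then 1 else 0)

/-- Operator acting on leg 3 only. -/
noncomputable def leg3 (A : Matrix (Fin n) (Fin n) ℂ) :
    Matrix (Fin n × Fin n × Fin n) (Fin n × Fin n × Fin n) ℂ :=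
  Matrix.of fun x y => (if x.1 = y.1 then 1 else 0) *
    (if x.2.1 = y.2.1 then 1 else 0) * A x.2.2 y.2.2

/-- Entrywise partial derivative of `r(L)` with respect to `λ_i`. -/
noncomputable def drmat (lam : Fin n → ℂ) (i : Fin n) :
    Matrix (Fin n × Fin n) (Fin n × Fin n) ℂ :=
  Matrix.of fun a b =>
    deriv (fun t : ℂ => rmat n (Function.update lam i t) a b) (lam i)

noncomputable def g (lam : Fin n → ℂ) (a b : Fin n) : ℂ :=
  if a = b then 0 else (lam a - lam b)⁻¹

noncomputable def dg (lam : Fin n → ℂ) (i a b : Fin n) : ℂ :=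
  if a = b then 0 else
    -(((lam a - lam b) ^ 2)⁻¹) *
      ((if i = a then 1 else 0) - (if i = b then 1 else 0))

lemma E_apply (i j a b : Fin n) : E n i j a b = if i = a ∧ j = b then 1 else 0 := by
  simp [E, Matrix.single]

lemma rmat_apply (lam : Fin n → ℂ) (a b c d : Fin n) :
    rmat n lam (a, b) (c, d) = if c = b ∧ d = a then g n lam a b else 0 := by
  classical
  unfold rmat
  rw [Matrix.sum_apply]
  have key : ∀ p ∈ Finset.univ.filter (fun p : Fin n × Fin n => p.1 < p.2),
      ((lam p.1 - lam p.2)⁻¹ •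
        (E n p.1 p.2 ⊗ₖ E n p.2 p.1 - E n p.2 p.1 ⊗ₖ E n p.1 p.2)) (a,b) (c,d)
      = (if p = (a,b) then (if c = b ∧ d = a then (lam a - lam b)⁻¹ else 0) else 0)
        - (if p = (b,a) then (if c = b ∧ d = a then (lam b - lam a)⁻¹ else 0) else 0) := by
    rintro ⟨i,j⟩ -
    simp only [Matrix.smul_apply, Matrix.sub_apply, Matrix.kroneckerMap_apply, E_apply,
      smul_eq_mul, ite_mul, mul_ite, one_mul, zero_mul, mul_one, mul_zero, ← ite_and,
      Prod.mk.injEq, mul_sub]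
    split_ifs <;> (try casesm* _ ∧ _) <;> subst_vars <;>
      first | rfl | (exfalso; tauto) | ring_nf | simp_all
  rw [Finset.sum_congr rfl key, Finset.sum_sub_distrib,
    Finset.sum_ite_eq' _ (a,b), Finset.sum_ite_eq' _ (b,a)]
  simp only [Finset.mem_filter, Finset.mem_univ, true_and, g]
  rcases lt_trichotomy a b with h | h | h
  · rw [if_pos h, if_neg (not_lt.mpr h.le)]
    simp [h.ne]
  · subst h
    simp [lt_irrefl]
  · rw [if_neg (not_lt.mpr h.le), if_pos h, if_neg h.ne']
    by_cases h2 : c = b ∧ d = a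
    · rw [if_pos h2, if_pos h2, zero_sub, ← inv_neg]
      ring_nf
    · simp [h2]

lemma drmat_apply (lam : Fin n → ℂ) (hlam : Function.Injective lam) (i a b c d : Fin n) :
    drmat n lam i (a, b) (c, d) = if c = b ∧ d = a then dg n lam i a b else 0 := by
  classical
  have hfun : (fun t : ℂ => rmat n (Function.update lam i t) (a, b) (c, d))
      = fun t : ℂ => if c = b ∧ d = a then
          (if a = b then 0 else (Function.update lam i t a - Function.update lam i t b)⁻¹)
        else 0 := by
    funext t; rw [rmat_apply]; rfl
  show deriv _ (lam i) = _
  rw [hfun]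
  by_cases hcd : c = b ∧ d = a
  swap
  · simp [hcd]
  simp only [if_pos hcd]
  by_cases hab : a = b
  · simp [hab, dg]
  simp only [if_neg hab, dg]
  have hne : lam a - lam b ≠ 0 := sub_ne_zero.mpr (fun he => hab (hlam he))
  by_cases hia : i = a
  · subst hia
    have hib : i ≠ b := hab
    have hupd : (fun t : ℂ => (Function.update lam i t i - Function.update lam i t b)⁻¹)
        = fun t : ℂ => (t - lam b)⁻¹ := by
      funext t
      rw [Function.update_self, Function.update_of_ne (Ne.symm hib)]
    rw [hupd]
    have hd : HasDerivAt (fun t : ℂ => (t - lam b)⁻¹)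
        (-(1) / (lam i - lam b) ^ 2) (lam i) :=
      (((hasDerivAt_id (lam i)).sub_const (lam b)).inv hne)
    rw [hd.deriv]
    simp only [if_pos rfl, if_neg hib]
    field_simp
    simp
  · by_cases hib : i = b
    · subst hib
      have hupd : (fun t : ℂ => (Function.update lam i t a - Function.update lam i t i)⁻¹)
          = fun t : ℂ => (lam a - t)⁻¹ := by
        funext t
        rw [Function.update_self, Function.update_of_ne (Ne.symm hia)]
      rw [hupd]
      have hd : HasDerivAt (fun t : ℂ => (lam a - t)⁻¹)
          (-(-1) / (lam a - lam i) ^ 2) (lam i) :=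
        (((hasDerivAt_id (lam i)).const_sub (lam a)).inv hne)
      rw [hd.deriv]
      simp only [if_pos rfl, if_neg hia]
      field_simp
      simp
    · have hupd : (fun t : ℂ => (Function.update lam i t a - Function.update lam i t b)⁻¹)
          = fun _ : ℂ => (lam a - lam b)⁻¹ := by
        funext t
        rw [Function.update_of_ne (Ne.symm hia), Function.update_of_ne (Ne.symm hib)]
      rw [hupd, deriv_const]
      simp [hia, hib]

section Products
variable (lam : Fin n → ℂ)

lemma mul_12_13 (a b c d e f : Fin n) :
    (leg12 n (rmat n lam) * leg13 n (rmat n lam)) (a,b,c) (d,e,f)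
      = if (d,e,f) = ((c,a,b) : Fin n × Fin n × Fin n)
          then g n lam a b * g n lam b c else 0 := by
  classical
  rw [Matrix.mul_apply, Finset.sum_eq_single ((b,a,c) : Fin n × Fin n × Fin n)]
  · simp only [leg12, leg13, Matrix.of_apply, rmat_apply, Prod.mk.injEq, ite_mul, mul_ite,
      one_mul, mul_one, zero_mul, mul_zero, ← ite_and]
    split_ifs <;> (try casesm* _ ∧ _) <;> subst_vars <;>
      first | rfl | simp_all | (exfalso; tauto) | ring
  · rintro ⟨z1,z2,z3⟩ - hz
    simp only [leg12, leg13, Matrix.of_apply, rmat_apply, Prod.mk.injEq, ite_mul, mul_ite,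
      one_mul, mul_one, zero_mul, mul_zero, ← ite_and]
    split_ifs <;> (try casesm* _ ∧ _) <;> subst_vars <;> simp_all
  · intro h; exact absurd (Finset.mem_univ _) h

lemma mul_13_12 (a b c d e f : Fin n) :
    (leg13 n (rmat n lam) * leg12 n (rmat n lam)) (a,b,c) (d,e,f)
      = if (d,e,f) = ((b,c,a) : Fin n × Fin n × Fin n)
          then g n lam a c * g n lam c b else 0 := by
  classical
  rw [Matrix.mul_apply, Finset.sum_eq_single ((c,b,a) : Fin n × Fin n × Fin n)]
  · simp only [leg12, leg13, leg23, leg31, Matrix.of_apply, rmat_apply, Prod.mk.injEq, ite_mul, mul_ite,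
      one_mul, mul_one, zero_mul, mul_zero, ← ite_and]
    split_ifs <;> (try casesm* _ ∧ _) <;> subst_vars <;>
      first | rfl | simp_all | (exfalso; tauto) | ring
  · rintro ⟨z1,z2,z3⟩ - hz
    simp only [leg12, leg13, leg23, leg31, Matrix.of_apply, rmat_apply, Prod.mk.injEq, ite_mul, mul_ite,
      one_mul, mul_one, zero_mul, mul_zero, ← ite_and]
    split_ifs <;> (try casesm* _ ∧ _) <;> subst_vars <;> simp_all
  · intro h; exact absurd (Finset.mem_univ _) h

lemma mul_12_23 (a b c d e f : Fin n) :
    (leg12 n (rmat n lam) * leg23 n (rmat n lam)) (a,b,c) (d,e,f)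
      = if (d,e,f) = ((b,c,a) : Fin n × Fin n × Fin n)
          then g n lam a b * g n lam a c else 0 := by
  classical
  rw [Matrix.mul_apply, Finset.sum_eq_single ((b,a,c) : Fin n × Fin n × Fin n)]
  · simp only [leg12, leg13, leg23, leg31, Matrix.of_apply, rmat_apply, Prod.mk.injEq, ite_mul, mul_ite,
      one_mul, mul_one, zero_mul, mul_zero, ← ite_and]
    split_ifs <;> (try casesm* _ ∧ _) <;> subst_vars <;>
      first | rfl | simp_all | (exfalso; tauto) | ring
  · rintro ⟨z1,z2,z3⟩ - hz
    simp only [leg12, leg13, leg23, leg31, Matrix.of_apply, rmat_apply, Prod.mk.injEq, ite_mul, mul_ite,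
      one_mul, mul_one, zero_mul, mul_zero, ← ite_and]
    split_ifs <;> (try casesm* _ ∧ _) <;> subst_vars <;> simp_all
  · intro h; exact absurd (Finset.mem_univ _) h

lemma mul_23_12 (a b c d e f : Fin n) :
    (leg23 n (rmat n lam) * leg12 n (rmat n lam)) (a,b,c) (d,e,f)
      = if (d,e,f) = ((c,a,b) : Fin n × Fin n × Fin n)
          then g n lam b c * g n lam a c else 0 := by
  classical
  rw [Matrix.mul_apply, Finset.sum_eq_single ((a,c,b) : Fin n × Fin n × Fin n)]
  · simp only [leg12, leg13, leg23, leg31, Matrix.of_apply, rmat_apply, Prod.mk.injEq, ite_mul, mul_ite,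
      one_mul, mul_one, zero_mul, mul_zero, ← ite_and]
    split_ifs <;> (try casesm* _ ∧ _) <;> subst_vars <;>
      first | rfl | simp_all | (exfalso; tauto) | ring
  · rintro ⟨z1,z2,z3⟩ - hz
    simp only [leg12, leg13, leg23, leg31, Matrix.of_apply, rmat_apply, Prod.mk.injEq, ite_mul, mul_ite,
      one_mul, mul_one, zero_mul, mul_zero, ← ite_and]
    split_ifs <;> (try casesm* _ ∧ _) <;> subst_vars <;> simp_all
  · intro h; exact absurd (Finset.mem_univ _) h

lemma mul_23_31 (a b c d e f : Fin n) :
    (leg23 n (rmat n lam) * leg31 n (rmat n lam)) (a,b,c) (d,e,f)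
      = if (d,e,f) = ((b,c,a) : Fin n × Fin n × Fin n)
          then g n lam b c * g n lam b a else 0 := by
  classical
  rw [Matrix.mul_apply, Finset.sum_eq_single ((a,c,b) : Fin n × Fin n × Fin n)]
  · simp only [leg12, leg13, leg23, leg31, Matrix.of_apply, rmat_apply, Prod.mk.injEq, ite_mul, mul_ite,
      one_mul, mul_one, zero_mul, mul_zero, ← ite_and]
    split_ifs <;> (try casesm* _ ∧ _) <;> subst_vars <;>
      first | rfl | simp_all | (exfalso; tauto) | ring
  · rintro ⟨z1,z2,z3⟩ - hz
    simp only [leg12, leg13, leg23, leg31, Matrix.of_apply, rmat_apply, Prod.mk.injEq, ite_mul, mul_ite,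
      one_mul, mul_one, zero_mul, mul_zero, ← ite_and]
    split_ifs <;> (try casesm* _ ∧ _) <;> subst_vars <;> simp_all
  · intro h; exact absurd (Finset.mem_univ _) h

lemma mul_31_23 (a b c d e f : Fin n) :
    (leg31 n (rmat n lam) * leg23 n (rmat n lam)) (a,b,c) (d,e,f)
      = if (d,e,f) = ((c,a,b) : Fin n × Fin n × Fin n)
          then g n lam c a * g n lam b a else 0 := by
  classical
  rw [Matrix.mul_apply, Finset.sum_eq_single ((c,b,a) : Fin n × Fin n × Fin n)]
  · simp only [leg12, leg13, leg23, leg31, Matrix.of_apply, rmat_apply, Prod.mk.injEq, ite_mul, mul_ite,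
      one_mul, mul_one, zero_mul, mul_zero, ← ite_and]
    split_ifs <;> (try casesm* _ ∧ _) <;> subst_vars <;>
      first | rfl | simp_all | (exfalso; tauto) | ring
  · rintro ⟨z1,z2,z3⟩ - hz
    simp only [leg12, leg13, leg23, leg31, Matrix.of_apply, rmat_apply, Prod.mk.injEq, ite_mul, mul_ite,
      one_mul, mul_one, zero_mul, mul_zero, ← ite_and]
    split_ifs <;> (try casesm* _ ∧ _) <;> subst_vars <;> simp_all
  · intro h; exact absurd (Finset.mem_univ _) h

lemma mul_d12 (hlam : Function.Injective lam) (i a b c d e f : Fin n) :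
    (leg12 n (drmat n lam i) * leg3 n (E n i i)) (a,b,c) (d,e,f)
      = if c = i ∧ (d,e,f) = ((b,a,c) : Fin n × Fin n × Fin n)
          then dg n lam i a b else 0 := by
  classical
  rw [Matrix.mul_apply, Finset.sum_eq_single ((b,a,c) : Fin n × Fin n × Fin n)]
  · simp only [leg12, leg23, leg31, leg1, leg2, leg3, Matrix.of_apply,
      drmat_apply n lam hlam, E_apply, Prod.mk.injEq, ite_mul, mul_ite,
      one_mul, mul_one, zero_mul, mul_zero, ← ite_and]
    split_ifs <;> (try casesm* _ ∧ _) <;> subst_vars <;>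
      first | rfl | simp_all | (exfalso; tauto) | ring
  · rintro ⟨z1,z2,z3⟩ - hz
    simp only [leg12, leg23, leg31, leg1, leg2, leg3, Matrix.of_apply,
      drmat_apply n lam hlam, E_apply, Prod.mk.injEq, ite_mul, mul_ite,
      one_mul, mul_one, zero_mul, mul_zero, ← ite_and]
    split_ifs <;> (try casesm* _ ∧ _) <;> subst_vars <;> simp_all
  · intro h; exact absurd (Finset.mem_univ _) h

lemma mul_d23 (hlam : Function.Injective lam) (i a b c d e f : Fin n) :
    (leg23 n (drmat n lam i) * leg1 n (E n i i)) (a,b,c) (d,e,f)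
      = if a = i ∧ (d,e,f) = ((a,c,b) : Fin n × Fin n × Fin n)
          then dg n lam i b c else 0 := by
  classical
  rw [Matrix.mul_apply, Finset.sum_eq_single ((a,c,b) : Fin n × Fin n × Fin n)]
  · simp only [leg12, leg23, leg31, leg1, leg2, leg3, Matrix.of_apply,
      drmat_apply n lam hlam, E_apply, Prod.mk.injEq, ite_mul, mul_ite,
      one_mul, mul_one, zero_mul, mul_zero, ← ite_and]
    split_ifs <;> (try casesm* _ ∧ _) <;> subst_vars <;>
      first | rfl | simp_all | (exfalso; tauto) | ring
  · rintro ⟨z1,z2,z3⟩ - hz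
    simp only [leg12, leg23, leg31, leg1, leg2, leg3, Matrix.of_apply,
      drmat_apply n lam hlam, E_apply, Prod.mk.injEq, ite_mul, mul_ite,
      one_mul, mul_one, zero_mul, mul_zero, ← ite_and]
    split_ifs <;> (try casesm* _ ∧ _) <;> subst_vars <;> simp_all
  · intro h; exact absurd (Finset.mem_univ _) h

lemma mul_d31 (hlam : Function.Injective lam) (i a b c d e f : Fin n) :
    (leg31 n (drmat n lam i) * leg2 n (E n i i)) (a,b,c) (d,e,f)
      = if b = i ∧ (d,e,f) = ((c,b,a) : Fin n × Fin n × Fin n)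
          then dg n lam i c a else 0 := by
  classical
  rw [Matrix.mul_apply, Finset.sum_eq_single ((c,b,a) : Fin n × Fin n × Fin n)]
  · simp only [leg12, leg23, leg31, leg1, leg2, leg3, Matrix.of_apply,
      drmat_apply n lam hlam, E_apply, Prod.mk.injEq, ite_mul, mul_ite,
      one_mul, mul_one, zero_mul, mul_zero, ← ite_and]
    split_ifs <;> (try casesm* _ ∧ _) <;> subst_vars <;>
      first | rfl | simp_all | (exfalso; tauto) | ring
  · rintro ⟨z1,z2,z3⟩ - hz
    simp only [leg12, leg23, leg31, leg1, leg2, leg3, Matrix.of_apply,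
      drmat_apply n lam hlam, E_apply, Prod.mk.injEq, ite_mul, mul_ite,
      one_mul, mul_one, zero_mul, mul_zero, ← ite_and]
    split_ifs <;> (try casesm* _ ∧ _) <;> subst_vars <;> simp_all
  · intro h; exact absurd (Finset.mem_univ _) h

lemma sum_ite_collapse (c : Fin n) (Q : Prop) [Decidable Q] (v : Fin n → ℂ) :
    (∑ i, if c = i ∧ Q then v i else 0) = if Q then v c else 0 := by
  rw [Finset.sum_eq_single c]
  · simp
  · intro i _ hi
    rw [if_neg]
    rintro ⟨rfl, -⟩
    exact hi rfl
  · intro h; exact absurd (Finset.mem_univ _) h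

end Products

/-- The classical dynamical Yang–Baxter equation for the dynamical r-matrix
`r(L)`:
`[r¹², r¹³] + [r¹², r²³] + [r²³, r³¹]
  + Σ_i (∂r¹²/∂λ_i) E³ᵢᵢ + (∂r²³/∂λ_i) E¹ᵢᵢ + (∂r³¹/∂λ_i) E²ᵢᵢ = 0`. -/
theorem dynamical_yang_baxter (lam : Fin n → ℂ) (hlam : Function.Injective lam) :
    (leg12 n (rmat n lam) * leg13 n (rmat n lam)
      - leg13 n (rmat n lam) * leg12 n (rmat n lam))
    + (leg12 n (rmat n lam) * leg23 n (rmat n lam)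
      - leg23 n (rmat n lam) * leg12 n (rmat n lam))
    + (leg23 n (rmat n lam) * leg31 n (rmat n lam)
      - leg31 n (rmat n lam) * leg23 n (rmat n lam))
    + ∑ i : Fin n,
        (leg12 n (drmat n lam i) * leg3 n (E n i i)
          + leg23 n (drmat n lam i) * leg1 n (E n i i)
          + leg31 n (drmat n lam i) * leg2 n (E n i i)) = 0 := by
  classical
  have hne : ∀ x y : Fin n, x ≠ y → lam x - lam y ≠ 0 :=
    fun x y h => sub_ne_zero.mpr (fun he => h (hlam he))
  ext ⟨a,b,c⟩ ⟨d,e,f⟩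
  simp only [Matrix.add_apply, Matrix.sub_apply, Matrix.sum_apply, Matrix.zero_apply,
    mul_12_13, mul_13_12, mul_12_23, mul_23_12, mul_23_31, mul_31_23,
    mul_d12 n lam hlam, mul_d23 n lam hlam, mul_d31 n lam hlam]
  rw [Finset.sum_add_distrib, Finset.sum_add_distrib,
    sum_ite_collapse, sum_ite_collapse, sum_ite_collapse]
  by_cases hab : a = b
  · subst hab
    by_cases hac : a = c
    · subst hac
      simp [g, dg]
    · have hrw : lam c - lam a = -(lam a - lam c) := by ring
      simp only [g, dg, if_pos rfl, if_neg hac, if_neg (Ne.symm hac), hrw, inv_neg,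
        pow_two, _root_.mul_inv_rev, Prod.mk.injEq]
      split_ifs <;> first | rfl | (exfalso; (try casesm* _ ∧ _); subst_vars; simp only [eq_self_iff_true, not_true] at *; done) | ring1
  · by_cases hbc : b = c
    · subst hbc
      have hrw : lam b - lam a = -(lam a - lam b) := by ring
      simp only [g, dg, if_pos rfl, if_neg hab, if_neg (Ne.symm hab), hrw, inv_neg,
        pow_two, _root_.mul_inv_rev, Prod.mk.injEq]
      split_ifs <;> first | rfl | (exfalso; (try casesm* _ ∧ _); subst_vars; simp only [eq_self_iff_true, not_true] at *; done) | ring1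
    · by_cases hac : a = c
      · subst hac
        have hrw : lam b - lam a = -(lam a - lam b) := by ring
        simp only [g, dg, if_pos rfl, if_neg hab, if_neg (Ne.symm hab), hrw, inv_neg,
          pow_two, _root_.mul_inv_rev, Prod.mk.injEq]
        split_ifs <;> first | rfl | (exfalso; (try casesm* _ ∧ _); subst_vars; simp only [eq_self_iff_true, not_true] at *; done) | ring1
      · have h1 := hne a b hab
        have h3 := hne b c hbc
        have h5 := hne a c hac
        have r1 : lam b - lam a = -(lam a - lam b) := by ring
        have r2 : lam c - lam b = -(lam b - lam c) := by ring
        have r3 : lam c - lam a = -(lam a - lam c) := by ring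
        simp only [g, dg, if_neg hab, if_neg (Ne.symm hab), if_neg hbc,
          if_neg (Ne.symm hbc), if_neg hac, if_neg (Ne.symm hac), Prod.mk.injEq,
          r1, r2, r3, inv_neg]
        split_ifs <;> first | rfl | (exfalso; (try casesm* _ ∧ _); subst_vars; simp only [eq_self_iff_true, not_true] at *; done) | ring1 | (field_simp [h1, h3, h5]; ring1)


end DynamicalYB
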